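/- Let P_3 be the path graph with adjacent vertices v_1, v_2, v_3 and let G be the Cartesian product graph ℤ □ P_3 with every edge of length 1. Then G is 3-densely (5,2)-path-chordal: for every cycle C in G with L(C) ≥ 5 and every vertex x of C, there is, within distance 5/2 of x in the length metric d_C, a shortcut vertex of C associated to a strict shortcut of length at most 2. -/

import Mathlib

open SimpleGraph

namespace Chordality

variable {V : Type*} {G : SimpleGraph V}

/-- The length of a walk in a graph whose edge `e` has length `ℓ e`. -/
noncomputable def wlen (ℓ : Sym2 V → ℝ) {u v : V} (w : G.Walk u v) : ℝ :=
  (w.edges.map ℓ).sum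

/-- The path metric of a metric graph: the infimum of the lengths of walks joining
two vertices. -/
noncomputable def gdist (G : SimpleGraph V) (ℓ : Sym2 V → ℝ) (u v : V) : ℝ :=
  sInf {x : ℝ | ∃ w : G.Walk u v, wlen ℓ w = x}

/-- A walk is geodesic if its length realizes the path metric between its endpoints. -/
def IsGeodesicWalk (ℓ : Sym2 V → ℝ) {u v : V} (w : G.Walk u v) : Prop :=
  wlen ℓ w = gdist G ℓ u v

/-- `G`, with edge lengths `ℓ`, is a metric graph: connected, locally finite,
with positive edge lengths. -/
def IsMetricGraph (G : SimpleGraph V) (ℓ : Sym2 V → ℝ) : Prop :=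
  G.Connected ∧ (∀ e ∈ G.edgeSet, 0 < ℓ e) ∧ ∀ v : V, (G.neighborSet v).Finite

/-- A walk lies inside the closed walk `c`. -/
def WalkIn {z u v : V} (c : G.Walk z z) (w : G.Walk u v) : Prop :=
  (∀ e ∈ w.edges, e ∈ c.edges) ∧ ∀ a ∈ w.support, a ∈ c.support

/-- The length metric `d_C` of a cycle `c`, evaluated on vertices of `c`:
the infimum of lengths of walks joining `u` and `v` inside `c`. -/
noncomputable def cdist (ℓ : Sym2 V → ℝ) {z : V} (c : G.Walk z z) (u v : V) : ℝ :=
  sInf {x : ℝ | ∃ w : G.Walk u v, WalkIn c w ∧ wlen ℓ w = x}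

/-- `σ` is a shortcut of the cycle `c`: a path joining two vertices `p, q` of `c`
with `L(σ) < d_C(p, q)`. -/
def IsShortcut (ℓ : Sym2 V → ℝ) {z p q : V} (c : G.Walk z z) (σ : G.Walk p q) : Prop :=
  σ.IsPath ∧ p ∈ c.support ∧ q ∈ c.support ∧ wlen ℓ σ < cdist ℓ c p q

/-- `σ` is a strict shortcut of `c`: a shortcut meeting `c` only at its endpoints. -/
def IsStrictShortcut (ℓ : Sym2 V → ℝ) {z p q : V} (c : G.Walk z z) (σ : G.Walk p q) : Prop :=
  IsShortcut ℓ c σ ∧ ∀ a ∈ σ.support, a ∈ c.support → a = p ∨ a = q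

/-- `v` is a shortcut vertex of `c`, i.e. an endpoint of some strict shortcut of `c`. -/
def ShortcutVertex (ℓ : Sym2 V → ℝ) {z : V} (c : G.Walk z z) (v : V) : Prop :=
  ∃ (p q : V) (σ : G.Walk p q), IsStrictShortcut ℓ c σ ∧ (v = p ∨ v = q)

/-- `v` is a shortcut vertex of `c` associated to a strict shortcut of length at most `m`. -/
def ShortcutVertexLe (ℓ : Sym2 V → ℝ) {z : V} (c : G.Walk z z) (m : ℝ) (v : V) : Prop :=
  ∃ (p q : V) (σ : G.Walk p q),
    IsStrictShortcut ℓ c σ ∧ wlen ℓ σ ≤ m ∧ (v = p ∨ v = q)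

/-- `(k,m)`-edge-chordal: every cycle of length at least `k` has a shortcut consisting of
a single edge of length at most `m`. -/
def EdgeChordal (G : SimpleGraph V) (ℓ : Sym2 V → ℝ) (k m : ℝ) : Prop :=
  ∀ (z : V) (c : G.Walk z z), c.IsCycle → k ≤ wlen ℓ c →
    ∃ (p q : V) (h : G.Adj p q),
      IsShortcut ℓ c (Walk.cons h Walk.nil) ∧ ℓ s(p, q) ≤ m

/-- `k`-path-chordal: every cycle of length at least `k` admits a shortcut. -/
def PathChordal (G : SimpleGraph V) (ℓ : Sym2 V → ℝ) (k : ℝ) : Prop :=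
  ∀ (z : V) (c : G.Walk z z), c.IsCycle → k ≤ wlen ℓ c →
    ∃ (p q : V) (σ : G.Walk p q), IsShortcut ℓ c σ

/-- `(k,m)`-path-chordal: every cycle of length at least `k` admits a shortcut of length
at most `m`. -/
def PathChordalLe (G : SimpleGraph V) (ℓ : Sym2 V → ℝ) (k m : ℝ) : Prop :=
  ∀ (z : V) (c : G.Walk z z), c.IsCycle → k ≤ wlen ℓ c →
    ∃ (p q : V) (σ : G.Walk p q), IsShortcut ℓ c σ ∧ wlen ℓ σ ≤ m

/-- `ε`-densely `(k,m)`-path-chordal: on every cycle of length at least `k`, the vertices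
that are shortcut vertices of strict shortcuts of length at most `m` form an `ε`-dense
subset of `(C, d_C)`. -/
def DenselyPathChordal (G : SimpleGraph V) (ℓ : Sym2 V → ℝ) (ε k m : ℝ) : Prop :=
  ∀ (z : V) (c : G.Walk z z), c.IsCycle → k ≤ wlen ℓ c →
    ∀ x ∈ c.support, ∃ v, ShortcutVertexLe ℓ c m v ∧ cdist ℓ c v x < ε

/-- `ε`-densely `k`-path-chordal: on every cycle of length at least `k`, the shortcut
vertices (of strict shortcuts, with no bound on their lengths) form an `ε`-dense subset
of `(C, d_C)`. -/
def DenselyKPathChordal (G : SimpleGraph V) (ℓ : Sym2 V → ℝ) (ε k : ℝ) : Prop :=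
  ∀ (z : V) (c : G.Walk z z), c.IsCycle → k ≤ wlen ℓ c →
    ∀ x ∈ c.support, ∃ v, ShortcutVertex ℓ c v ∧ cdist ℓ c v x < ε

/-- The geodesic triangle with sides `g1, g2, g3` is `δ`-thin: each side is contained in
the `δ`-neighborhood of the union of the other two sides. -/
def ThinTriangle (ℓ : Sym2 V → ℝ) (δ : ℝ) {x y z : V}
    (g1 : G.Walk x y) (g2 : G.Walk y z) (g3 : G.Walk z x) : Prop :=
  (∀ p ∈ g1.support, ∃ q, (q ∈ g2.support ∨ q ∈ g3.support) ∧ gdist G ℓ p q ≤ δ) ∧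
  (∀ p ∈ g2.support, ∃ q, (q ∈ g3.support ∨ q ∈ g1.support) ∧ gdist G ℓ p q ≤ δ) ∧
  (∀ p ∈ g3.support, ∃ q, (q ∈ g1.support ∨ q ∈ g2.support) ∧ gdist G ℓ p q ≤ δ)

/-- `G` is `δ`-hyperbolic: every geodesic triangle is `δ`-thin. -/
def Hyperbolic (G : SimpleGraph V) (ℓ : Sym2 V → ℝ) (δ : ℝ) : Prop :=
  ∀ (x y z : V) (g1 : G.Walk x y) (g2 : G.Walk y z) (g3 : G.Walk z x),
    IsGeodesicWalk ℓ g1 → IsGeodesicWalk ℓ g2 → IsGeodesicWalk ℓ g3 →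
    ThinTriangle ℓ δ g1 g2 g3

/-- The sharp hyperbolicity constant `δ(G)`. -/
noncomputable def hypConst (G : SimpleGraph V) (ℓ : Sym2 V → ℝ) : ℝ :=
  sInf {δ : ℝ | 0 ≤ δ ∧ Hyperbolic G ℓ δ}

/-- A walk lies inside the geodesic triangle with sides `g1, g2, g3`. -/
def WalkInTri {x y z u v : V} (g1 : G.Walk x y) (g2 : G.Walk y z) (g3 : G.Walk z x)
    (w : G.Walk u v) : Prop :=
  (∀ e ∈ w.edges, e ∈ g1.edges ∨ e ∈ g2.edges ∨ e ∈ g3.edges) ∧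
  ∀ a ∈ w.support, a ∈ g1.support ∨ a ∈ g2.support ∨ a ∈ g3.support

/-- The length metric `d_T` of the geodesic triangle with sides `g1, g2, g3`,
evaluated on vertices of the triangle. -/
noncomputable def tdist (ℓ : Sym2 V → ℝ) {x y z : V} (g1 : G.Walk x y) (g2 : G.Walk y z)
    (g3 : G.Walk z x) (u v : V) : ℝ :=
  sInf {r : ℝ | ∃ w : G.Walk u v, WalkInTri g1 g2 g3 w ∧ wlen ℓ w = r}

/-- `σ` is a shortcut of the geodesic triangle with sides `g1, g2, g3`: a path joining
two vertices `p, q` of the triangle with `L(σ) < d_T(p, q)`. -/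
def IsTriShortcut (ℓ : Sym2 V → ℝ) {x y z p q : V} (g1 : G.Walk x y) (g2 : G.Walk y z)
    (g3 : G.Walk z x) (σ : G.Walk p q) : Prop :=
  σ.IsPath ∧ (p ∈ g1.support ∨ p ∈ g2.support ∨ p ∈ g3.support) ∧
    (q ∈ g1.support ∨ q ∈ g2.support ∨ q ∈ g3.support) ∧
    wlen ℓ σ < tdist ℓ g1 g2 g3 p q

/-- `v` is a shortcut vertex of the triangle, associated to a shortcut of length
at most `m`. -/
def TriShortcutVertexLe (ℓ : Sym2 V → ℝ) {x y z : V} (g1 : G.Walk x y) (g2 : G.Walk y z)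
    (g3 : G.Walk z x) (m : ℝ) (v : V) : Prop :=
  ∃ (p q : V) (σ : G.Walk p q),
    IsTriShortcut ℓ g1 g2 g3 σ ∧ wlen ℓ σ ≤ m ∧ (v = p ∨ v = q)

/-- `ε`-densely `(k,m)`-path-chordal on the triangles: for every geodesic triangle of
total length at least `k`, the shortcut vertices of shortcuts of length at most `m`
form an `ε`-dense subset of `(T, d_T)`. -/
def DenselyPathChordalOnTriangles (G : SimpleGraph V) (ℓ : Sym2 V → ℝ) (ε k m : ℝ) : Prop :=
  ∀ (x y z : V) (g1 : G.Walk x y) (g2 : G.Walk y z) (g3 : G.Walk z x),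
    IsGeodesicWalk ℓ g1 → IsGeodesicWalk ℓ g2 → IsGeodesicWalk ℓ g3 →
    k ≤ wlen ℓ g1 + wlen ℓ g2 + wlen ℓ g3 →
    ∀ p, (p ∈ g1.support ∨ p ∈ g2.support ∨ p ∈ g3.support) →
      ∃ v, TriShortcutVertexLe ℓ g1 g2 g3 m v ∧ tdist ℓ g1 g2 g3 v p < ε

end Chordality

namespace Chordality

/-- The graph `ℤ`, where `a` and `a + 1` are adjacent. -/
def zline : SimpleGraph ℤ := SimpleGraph.fromRel fun a b => b = a + 1

/-- The Cartesian product graph `ℤ □ P₃`. -/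
def GZP3 : SimpleGraph (ℤ × Fin 3) := zline.boxProd (SimpleGraph.pathGraph 3)

/-! ### Auxiliary generic lemmas about walks and cycles -/

section Generic

open SimpleGraph Walk

variable {V : Type*} [DecidableEq V] {G : SimpleGraph V}

lemma wlen_one {u v : V} (w : G.Walk u v) : wlen (fun _ => (1 : ℝ)) w = w.length := by
  unfold wlen
  rw [List.map_const', List.sum_replicate, w.length_edges, nsmul_eq_mul, mul_one]

lemma mem_support_of_mem_edges' {u v x : V} {w : G.Walk u v} {e : Sym2 V}
    (he : e ∈ w.edges) (hx : x ∈ e) : x ∈ w.support := by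
  induction e with
  | _ a b =>
    rcases Sym2.mem_iff.1 hx with rfl | rfl
    · exact w.fst_mem_support_of_mem_edges he
    · exact w.snd_mem_support_of_mem_edges he

lemma edge_start_unique {a b t₁ t₂ : V} (q : G.Walk a b) (hq : q.support.Nodup)
    (h1 : s(a, t₁) ∈ q.edges) (h2 : s(a, t₂) ∈ q.edges) : t₁ = t₂ := by
  induction q with
  | nil => simp at h1
  | @cons u m b hadj p ih =>
    rw [support_cons, List.nodup_cons] at hq
    rw [edges_cons, List.mem_cons] at h1 h2
    have key : ∀ t : V, s(u, t) = s(u, m) ∨ s(u, t) ∈ p.edges → t = m := by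
      intro t ht
      rcases ht with ht | ht
      · rcases Sym2.eq_iff.1 ht with ⟨-, rfl⟩ | ⟨h', -⟩
        · rfl
        · exact absurd h' hadj.ne
      · exact absurd (mem_support_of_mem_edges' ht (Sym2.mem_mk_left _ _)) hq.1
    rw [key t₁ h1, key t₂ h2]

/-- Every vertex on a cycle has exactly two neighbors along the cycle. -/
lemma cycle_two_nbrs {z x : V} {c : G.Walk z z} (hc : c.IsCycle) (hx : x ∈ c.support) :
    ∃ u w, u ≠ w ∧ s(x, u) ∈ c.edges ∧ s(x, w) ∈ c.edges ∧
      ∀ t, s(x, t) ∈ c.edges → t = u ∨ t = w := by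
  have main : ∀ (c' : G.Walk x x), c'.IsCycle → (∀ e, e ∈ c'.edges ↔ e ∈ c.edges) →
      ∃ u w, u ≠ w ∧ s(x, u) ∈ c.edges ∧ s(x, w) ∈ c.edges ∧
        ∀ t, s(x, t) ∈ c.edges → t = u ∨ t = w := by
    intro c' hc' hmem
    cases c' with
    | nil => exact absurd hc' (Walk.IsCycle.not_of_nil)
    | @cons _ s₀ _ hadj q =>
      obtain ⟨hqpath, hqe⟩ := (Walk.cons_isCycle_iff q hadj).1 hc'
      have hlen : 2 ≤ q.length := by
        have := hc'.three_le_length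
        simp only [Walk.length_cons] at this
        omega
      have hqrnil : ¬ q.reverse.Nil := by
        rw [Walk.nil_iff_length_eq, Walk.length_reverse]
        omega
      obtain ⟨w₀, hadj₂, q₂, hq₂⟩ := Walk.not_nil_iff.1 hqrnil
      have hw₀e : s(x, w₀) ∈ q.edges := by
        have : s(x, w₀) ∈ q.reverse.edges := by
          rw [hq₂, Walk.edges_cons]
          exact List.mem_cons_self
        rwa [Walk.edges_reverse, List.mem_reverse] at this
      have huw : s₀ ≠ w₀ := by
        rintro rfl
        exact hqe hw₀e
      have he₁ : s(x, s₀) ∈ c.edges := by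
        rw [← hmem]
        exact List.mem_cons_self
      have he₂ : s(x, w₀) ∈ c.edges := by
        rw [← hmem]
        rw [Walk.edges_cons]
        exact List.mem_cons_of_mem _ hw₀e
      refine ⟨s₀, w₀, huw, he₁, he₂, ?_⟩
      intro t ht
      rw [← hmem, Walk.edges_cons, List.mem_cons] at ht
      rcases ht with ht | ht
      · rcases Sym2.eq_iff.1 ht with ⟨-, rfl⟩ | ⟨h', -⟩
        · exact Or.inl rfl
        · exact absurd h' hadj.ne
      · right
        have hnodup : q.reverse.support.Nodup := by
          rw [Walk.support_reverse, List.nodup_reverse]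
          exact hqpath.support_nodup
        refine edge_start_unique q.reverse hnodup ?_ ?_
        · rw [Walk.edges_reverse, List.mem_reverse]; exact ht
        · rw [Walk.edges_reverse, List.mem_reverse]; exact hw₀e
  refine main (c.rotate x hx) (hc.rotate hx) ?_
  intro e
  exact (c.rotate_edges x hx).mem_iff

lemma nbr_unique {z v t₁ t₂ : V} {c : G.Walk z z} (hc : c.IsCycle)
    (h1 : s(v, t₁) ∈ c.edges) (h2 : s(v, t₂) ∈ c.edges) (hne : t₁ ≠ t₂) :
    ∀ r, s(v, r) ∈ c.edges → r = t₁ ∨ r = t₂ := by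
  have hv : v ∈ c.support := c.fst_mem_support_of_mem_edges h1
  obtain ⟨a, b, hab, ha, hb, huniq⟩ := cycle_two_nbrs hc hv
  intro r hr
  have hr' := huniq r hr
  have h1' := huniq t₁ h1
  have h2' := huniq t₂ h2
  rcases h1' with rfl | rfl <;> rcases h2' with rfl | rfl <;> tauto

lemma other_nbr {z x u : V} {c : G.Walk z z} (hc : c.IsCycle) (hxu : s(x, u) ∈ c.edges) :
    ∃ t, t ≠ x ∧ s(u, t) ∈ c.edges ∧ ∀ r, s(u, r) ∈ c.edges → r = t ∨ r = x := by
  have hu : u ∈ c.support := c.snd_mem_support_of_mem_edges hxu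
  obtain ⟨a, b, hab, ha, hb, huniq⟩ := cycle_two_nbrs hc hu
  have hx' : s(u, x) ∈ c.edges := by rwa [Sym2.eq_swap] at hxu
  rcases huniq x hx' with rfl | rfl
  · refine ⟨b, fun h => hab h.symm, hb, ?_⟩
    intro r hr
    rcases huniq r hr with rfl | rfl
    · exact Or.inr rfl
    · exact Or.inl rfl
  · refine ⟨a, fun h => hab h, ha, ?_⟩
    intro r hr
    rcases huniq r hr with rfl | rfl
    · exact Or.inl rfl
    · exact Or.inr rfl

lemma mem_support_rotate {z p q : V} {c : G.Walk z z} (hp : p ∈ c.support) :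
    q ∈ (c.rotate p hp).support ↔ q ∈ c.support := by
  show q ∈ ((c.dropUntil p hp).append (c.takeUntil p hp)).support ↔ _
  rw [Walk.mem_support_append_iff]
  conv_rhs => rw [← c.take_spec hp]
  rw [Walk.mem_support_append_iff, or_comm]

lemma exists_walkIn {z p q : V} {c : G.Walk z z} (hp : p ∈ c.support) (hq : q ∈ c.support) :
    ∃ w : G.Walk p q, WalkIn c w := by
  have hq' : q ∈ (c.rotate p hp).support := (mem_support_rotate hp).2 hq
  refine ⟨(c.rotate p hp).takeUntil q hq', ?_, ?_⟩
  · intro e he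
    have h1 := Walk.edges_takeUntil_subset _ hq' he
    exact (c.rotate_edges p hp).mem_iff.1 h1
  · intro a ha
    have h1 := Walk.support_takeUntil_subset _ hq' ha
    exact (mem_support_rotate hp).1 h1

lemma walkIn_closed {z : V} {c : G.Walk z z} {S : V → Prop}
    (hcl : ∀ v, S v → ∀ t, s(v, t) ∈ c.edges → S t) :
    ∀ {a b : V} (w : G.Walk a b), (∀ e ∈ w.edges, e ∈ c.edges) → S a → S b := by
  intro a b w
  induction w with
  | nil => exact fun _ h => h
  | cons hadj p ih =>
    intro he ha
    refine ih (fun e he' => he e (List.mem_cons_of_mem _ he')) ?_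
    exact hcl _ ha _ (he _ (List.mem_cons_self))

/-- The trap lemma: a cycle meeting a finite set closed under cycle-adjacency is no longer
than the cardinality of the set. -/
lemma trap {z x : V} {c : G.Walk z z} (hc : c.IsCycle) (S : Finset V)
    (hcl : ∀ v ∈ S, ∀ t, s(v, t) ∈ c.edges → t ∈ S)
    (hx : x ∈ c.support) (hxS : x ∈ S) : c.length ≤ S.card := by
  have hsupp : ∀ v ∈ c.support, v ∈ S := by
    intro v hv
    obtain ⟨w, hw⟩ := exists_walkIn hx hv
    exact walkIn_closed (S := fun a => a ∈ S) (fun v hv t ht => hcl v hv t ht) w hw.1 hxS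
  have hnodup : c.support.tail.Nodup := hc.support_nodup
  have hlen : c.support.tail.length = c.length := by
    have := c.length_support
    have h2 := c.support.length_tail
    omega
  have hsub : c.support.tail.toFinset ⊆ S := by
    intro v hv
    rw [List.mem_toFinset] at hv
    exact hsupp v (List.tail_subset _ hv)
  calc c.length = c.support.tail.toFinset.card := by
        rw [List.toFinset_card_of_nodup hnodup, hlen]
    _ ≤ S.card := Finset.card_le_card hsub

/-- Crossing predicate for a cut given by `f`. -/
def crossB (f : V → Bool) : Sym2 V → Bool :=
  Sym2.lift ⟨fun a b => xor (f a) (f b), fun a b => Bool.xor_comm _ _⟩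

lemma cross_even_aux (f : V → Bool) {a b : V} (w : G.Walk a b) :
    Even (w.edges.countP (crossB f)) ↔ f a = f b := by
  induction w with
  | nil => simp
  | @cons u v' b hadj p ih =>
    rw [Walk.edges_cons, List.countP_cons]
    have hcr : crossB f s(u, v') = xor (f u) (f v') := rfl
    cases hfu : f u <;> cases hfv : f v' <;> cases hfb : f b <;>
      simp_all [hcr, Nat.even_add_one, Nat.even_add] <;> omega

lemma countP_cross_even {z : V} (c : G.Walk z z) (f : V → Bool) :
    Even (c.edges.countP (crossB f)) := (cross_even_aux f c).2 rfl

lemma exists_second {α : Type*} [DecidableEq α] {l : List α} {p : α → Bool} (hn : l.Nodup)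
    (hev : Even (l.countP p)) {e : α} (he : e ∈ l) (hpe : p e = true) :
    ∃ e', e' ∈ l ∧ p e' = true ∧ e' ≠ e := by
  by_contra h
  push_neg at h
  have hall : ∀ x ∈ l.filter p, x = e := by
    intro x hx
    exact h x (List.mem_of_mem_filter hx) (List.of_mem_filter hx)
  have hmem : e ∈ l.filter p := List.mem_filter.2 ⟨he, hpe⟩
  have hfn : (l.filter p).Nodup := hn.filter p
  have hcount : (l.filter p).count e = 1 := List.count_eq_one_of_mem hfn hmem
  have hlen : (l.filter p).length = 1 := by
    rw [← hcount]
    exact (List.count_eq_length.2 (fun b hb => (hall b hb).symm)).symm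
  rw [List.countP_eq_length_filter, hlen] at hev
  exact (Nat.not_even_iff_odd.2 odd_one) hev

lemma edge_of_length_one {u v : V} {w : G.Walk u v} (h : w.length = 1) :
    s(u, v) ∈ w.edges := by
  cases w with
  | nil => simp at h
  | cons hadj p =>
    have h0 : p.length = 0 := by simpa using h
    have := Walk.eq_of_length_eq_zero h0
    subst this
    simp

lemma mid_of_length_two {u v : V} {w : G.Walk u v} (h : w.length = 2) :
    ∃ r, r ∈ w.support ∧ G.Adj u r ∧ G.Adj r v := by
  cases w with
  | nil => simp at h
  | cons hadj p =>
    cases p with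
    | nil => simp at h
    | cons hadj2 p2 =>
      have h0 : p2.length = 0 := by simpa using h
      have := Walk.eq_of_length_eq_zero h0
      subst this
      exact ⟨_, by simp, hadj, hadj2⟩

lemma cdist_le {z p q : V} {c : G.Walk z z} (w : G.Walk p q) (hw : WalkIn c w) :
    cdist (fun _ => (1 : ℝ)) c p q ≤ w.length := by
  apply csInf_le
  · refine ⟨0, ?_⟩
    rintro r ⟨w', -, rfl⟩
    rw [wlen_one]
    positivity
  · exact ⟨w, hw, wlen_one w⟩

lemma le_cdist {z p q : V} {c : G.Walk z z} (hp : p ∈ c.support) (hq : q ∈ c.support)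
    {k : ℝ} (h : ∀ w : G.Walk p q, WalkIn c w → k ≤ w.length) :
    k ≤ cdist (fun _ => (1 : ℝ)) c p q := by
  apply le_csInf
  · obtain ⟨w, hw⟩ := exists_walkIn hp hq
    exact ⟨_, w, hw, rfl⟩
  · rintro r ⟨w, hwin, rfl⟩
    rw [wlen_one]
    exact h w hwin

end Generic

/-! ### Specific lemmas about `ℤ □ P₃` -/

section Specific

open SimpleGraph Walk

lemma gzp3_adj {a b : ℤ} {i j : Fin 3} :
    GZP3.Adj (a, i) (b, j) ↔
      (a = b ∧ (i.val + 1 = j.val ∨ j.val + 1 = i.val)) ∨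
      (i = j ∧ (b = a + 1 ∨ a = b + 1)) := by
  show (zline.boxProd (SimpleGraph.pathGraph 3)).Adj _ _ ↔ _
  rw [boxProd_adj]
  constructor
  · rintro (⟨hz, rfl⟩ | ⟨hp, rfl⟩)
    · rw [zline] at hz
      rw [SimpleGraph.fromRel_adj] at hz
      exact Or.inr ⟨rfl, by omega⟩
    · exact Or.inl ⟨rfl, SimpleGraph.pathGraph_adj.1 hp⟩
  · rintro (⟨rfl, h⟩ | ⟨rfl, h⟩)
    · exact Or.inr ⟨SimpleGraph.pathGraph_adj.2 h, rfl⟩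
    · refine Or.inl ⟨?_, rfl⟩
      rw [zline, SimpleGraph.fromRel_adj]
      constructor
      · intro h'; omega
      · omega

lemma adj_enum0 {n : ℤ} {t : ℤ × Fin 3} (h : GZP3.Adj (n, 0) t) :
    t = (n, 1) ∨ t = (n + 1, 0) ∨ t = (n - 1, 0) := by
  obtain ⟨b, j⟩ := t
  rw [gzp3_adj] at h
  fin_cases j <;> simp_all <;> omega

lemma adj_enum1 {n : ℤ} {t : ℤ × Fin 3} (h : GZP3.Adj (n, 1) t) :
    t = (n, 0) ∨ t = (n, 2) ∨ t = (n + 1, 1) ∨ t = (n - 1, 1) := by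
  obtain ⟨b, j⟩ := t
  rw [gzp3_adj] at h
  fin_cases j <;> simp_all <;> omega

lemma adj_enum2 {n : ℤ} {t : ℤ × Fin 3} (h : GZP3.Adj (n, 2) t) :
    t = (n, 1) ∨ t = (n + 1, 2) ∨ t = (n - 1, 2) := by
  obtain ⟨b, j⟩ := t
  rw [gzp3_adj] at h
  fin_cases j <;> simp_all <;> omega

lemma adj01 (n : ℤ) : GZP3.Adj (n, 0) (n, 1) :=
  gzp3_adj.2 (Or.inl ⟨rfl, by norm_num⟩)

lemma adj12 (n : ℤ) : GZP3.Adj (n, 1) (n, 2) :=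
  gzp3_adj.2 (Or.inl ⟨rfl, by norm_num⟩)

lemma adjH (n : ℤ) (j : Fin 3) : GZP3.Adj (n, j) (n + 1, j) :=
  gzp3_adj.2 (Or.inr ⟨rfl, Or.inl rfl⟩)

/-- Columns of adjacent vertices differ by at most one. -/
lemma adj_col {p q : ℤ × Fin 3} (h : GZP3.Adj p q) :
    q.1 = p.1 ∨ q.1 = p.1 + 1 ∨ q.1 = p.1 - 1 := by
  obtain ⟨a, i⟩ := p
  obtain ⟨b, j⟩ := q
  rw [gzp3_adj] at h
  rcases h with ⟨rfl, -⟩ | ⟨-, h | h⟩ <;> simp <;> omega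

/-- A chord: an edge of the graph between two vertices of the cycle which is not an
edge of the cycle is a strict shortcut of length `1`. -/
lemma chord_shortcut {z : ℤ × Fin 3} {c : GZP3.Walk z z} {p q : ℤ × Fin 3}
    (hadj : GZP3.Adj p q) (hp : p ∈ c.support) (hq : q ∈ c.support)
    (hne : s(p, q) ∉ c.edges) :
    ShortcutVertexLe (fun _ => (1 : ℝ)) c 2 p ∧
      ShortcutVertexLe (fun _ => (1 : ℝ)) c 2 q := by
  have hlb : ∀ w : GZP3.Walk p q, WalkIn c w → (2 : ℝ) ≤ w.length := by
    intro w hw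
    have h2 : 2 ≤ w.length := by
      by_contra hcon
      push_neg at hcon
      interval_cases h : w.length
      · exact hadj.ne (Walk.eq_of_length_eq_zero h)
      · exact hne (hw.1 _ (edge_of_length_one h))
    exact_mod_cast h2
  have hcd : (1 : ℝ) < cdist (fun _ => (1 : ℝ)) c p q :=
    lt_of_lt_of_le (by norm_num) (le_cdist hp hq hlb)
  have hstrict : IsStrictShortcut (fun _ => (1 : ℝ)) c (Walk.cons hadj Walk.nil) := by
    refine ⟨⟨?_, hp, hq, ?_⟩, ?_⟩
    · simp [hadj.ne]
    · rw [wlen_one]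
      simpa using hcd
    · intro a ha _
      simp only [Walk.support_cons, Walk.support_nil, List.mem_cons,
        List.mem_singleton] at ha
      tauto
  have hlen : wlen (fun _ => (1 : ℝ)) (Walk.cons hadj Walk.nil) ≤ 2 := by
    rw [wlen_one]
    norm_num
  exact ⟨⟨p, q, _, hstrict, hlen, Or.inl rfl⟩, ⟨p, q, _, hstrict, hlen, Or.inr rfl⟩⟩

/-- A vertical shortcut through a middle vertex not on the cycle. -/
lemma vshort_shortcut {z : ℤ × Fin 3} {c : GZP3.Walk z z} {n : ℤ}
    (h0 : ((n, 0) : ℤ × Fin 3) ∈ c.support) (h2 : ((n, 2) : ℤ × Fin 3) ∈ c.support)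
    (h1 : ((n, 1) : ℤ × Fin 3) ∉ c.support) :
    ShortcutVertexLe (fun _ => (1 : ℝ)) c 2 (n, 0) ∧
      ShortcutVertexLe (fun _ => (1 : ℝ)) c 2 (n, 2) := by
  have hne02 : ((n, 0) : ℤ × Fin 3) ≠ (n, 2) := by simp
  have hnadj : ¬ GZP3.Adj (n, 0) (n, 2) := by
    rw [gzp3_adj]
    simp
  have hlb : ∀ w : GZP3.Walk (n, 0) (n, 2), WalkIn c w → (3 : ℝ) ≤ w.length := by
    intro w hw
    have h3 : 3 ≤ w.length := by
      by_contra hcon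
      push_neg at hcon
      interval_cases h : w.length
      · exact hne02 (Walk.eq_of_length_eq_zero h)
      · exact hnadj (c.adj_of_mem_edges (hw.1 _ (edge_of_length_one h)))
      · obtain ⟨r, hr, ha1, ha2⟩ := mid_of_length_two h
        have hr1 : r = (n, 1) := by
          rcases adj_enum0 ha1 with rfl | rfl | rfl
          · rfl
          · exfalso
            rcases adj_enum0 ha2 with h' | h' | h' <;> simp [Prod.ext_iff] at h'
          · exfalso
            rcases adj_enum0 ha2 with h' | h' | h' <;> simp [Prod.ext_iff] at h'
        exact h1 (hw.2 _ (hr1 ▸ hr))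
    exact_mod_cast h3
  have hcd : (2 : ℝ) < cdist (fun _ => (1 : ℝ)) c (n, 0) (n, 2) :=
    lt_of_lt_of_le (by norm_num) (le_cdist h0 h2 hlb)
  let σ : GZP3.Walk (n, 0) (n, 2) := Walk.cons (adj01 n) (Walk.cons (adj12 n) Walk.nil)
  have hsupp : σ.support = [(n, 0), (n, 1), (n, 2)] := rfl
  have hstrict : IsStrictShortcut (fun _ => (1 : ℝ)) c σ := by
    refine ⟨⟨?_, h0, h2, ?_⟩, ?_⟩
    · rw [Walk.isPath_def, hsupp]
      simp
    · rw [wlen_one]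
      have hσl : σ.length = 2 := rfl
      rw [hσl]
      exact_mod_cast hcd
    · intro a ha hain
      rw [hsupp] at ha
      simp only [List.mem_cons, List.not_mem_nil, or_false] at ha
      rcases ha with rfl | rfl | rfl
      · exact Or.inl rfl
      · exact absurd hain h1
      · exact Or.inr rfl
  have hlen : wlen (fun _ => (1 : ℝ)) σ ≤ 2 := by
    rw [wlen_one]
    norm_num [σ]
  exact ⟨⟨_, _, σ, hstrict, hlen, Or.inl rfl⟩, ⟨_, _, σ, hstrict, hlen, Or.inr rfl⟩⟩

/-- The goal of the main argument. -/
def Goal {z : ℤ × Fin 3} (c : GZP3.Walk z z) (x : ℤ × Fin 3) : Prop :=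
  ∃ v, ShortcutVertexLe (fun _ => (1 : ℝ)) c 2 v ∧
    cdist (fun _ => (1 : ℝ)) c v x < 5 / 2

lemma goal_self {z : ℤ × Fin 3} {c : GZP3.Walk z z} {x : ℤ × Fin 3} (hx : x ∈ c.support)
    (h : ShortcutVertexLe (fun _ => (1 : ℝ)) c 2 x) : Goal c x := by
  refine ⟨x, h, lt_of_le_of_lt (cdist_le Walk.nil ⟨by simp, by simpa⟩) ?_⟩
  norm_num

lemma goal_dist1 {z : ℤ × Fin 3} {c : GZP3.Walk z z} {x v : ℤ × Fin 3}
    (hv : s(v, x) ∈ c.edges) (h : ShortcutVertexLe (fun _ => (1 : ℝ)) c 2 v) :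
    Goal c x := by
  refine ⟨v, h, lt_of_le_of_lt
    (cdist_le (Walk.cons (c.adj_of_mem_edges hv) Walk.nil) ⟨?_, ?_⟩) ?_⟩
  · intro e he
    simp only [Walk.edges_cons, Walk.edges_nil, List.mem_singleton] at he
    exact he ▸ hv
  · intro a ha
    simp only [Walk.support_cons, Walk.support_nil, List.mem_cons, List.mem_singleton] at ha
    rcases ha with rfl | rfl | h'
    · exact c.fst_mem_support_of_mem_edges hv
    · exact c.snd_mem_support_of_mem_edges hv
    · exact absurd h' (by simp)
  · norm_num

lemma goal_dist2 {z : ℤ × Fin 3} {c : GZP3.Walk z z} {x v m : ℤ × Fin 3}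
    (h1 : s(v, m) ∈ c.edges) (h2 : s(m, x) ∈ c.edges)
    (h : ShortcutVertexLe (fun _ => (1 : ℝ)) c 2 v) : Goal c x := by
  refine ⟨v, h, lt_of_le_of_lt
    (cdist_le (Walk.cons (c.adj_of_mem_edges h1)
      (Walk.cons (c.adj_of_mem_edges h2) Walk.nil)) ⟨?_, ?_⟩) ?_⟩
  · intro e he
    simp only [Walk.edges_cons, Walk.edges_nil, List.mem_cons, List.mem_singleton] at he
    rcases he with rfl | rfl | h'
    · exact h1
    · exact h2
    · exact absurd h' (by simp)
  · intro a ha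
    simp only [Walk.support_cons, Walk.support_nil, List.mem_cons, List.mem_singleton] at ha
    rcases ha with rfl | rfl | rfl | h'
    · exact c.fst_mem_support_of_mem_edges h1
    · exact c.fst_mem_support_of_mem_edges h2
    · exact c.snd_mem_support_of_mem_edges h2
    · exact absurd h' (by simp)
  · norm_num

/-- The parity argument: a cycle crosses the cut at column `n` an even number of times,
so a second crossing edge exists. -/
lemma second_cross {z : ℤ × Fin 3} {c : GZP3.Walk z z} (hc : c.IsCycle) (n : ℤ)
    {p₀ q₀ : ℤ × Fin 3} (he₀ : s(p₀, q₀) ∈ c.edges) (hp₀ : p₀.1 ≤ n) (hq₀ : ¬ q₀.1 ≤ n) :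
    ∃ p q : ℤ × Fin 3, s(p, q) ∈ c.edges ∧ s(p, q) ≠ s(p₀, q₀) ∧
      p.1 = n ∧ q.1 = n + 1 := by
  classical
  set f : ℤ × Fin 3 → Bool := fun v => decide (v.1 ≤ n) with hf
  have hev := countP_cross_even c f
  have hcr : crossB f s(p₀, q₀) = true := by
    show xor (f p₀) (f q₀) = true
    simp [hf, hp₀, hq₀]
  obtain ⟨e', he', hcr', hne⟩ := exists_second hc.isTrail.edges_nodup hev he₀ hcr
  revert hcr' hne
  induction e' with
  | _ a b =>
    intro hcr' hne
    have hfab : f a ≠ f b := by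
      have : xor (f a) (f b) = true := hcr'
      intro h
      rw [h] at this
      simp at this
    have hadj : GZP3.Adj a b := c.adj_of_mem_edges he'
    have key : ∀ p q : ℤ × Fin 3, GZP3.Adj p q → p.1 ≤ n → ¬ q.1 ≤ n →
        p.1 = n ∧ q.1 = n + 1 := by
      intro p q hpq h1 h2
      rcases adj_col hpq with h | h | h <;> omega
    by_cases ha : a.1 ≤ n
    · have hb : ¬ b.1 ≤ n := by
        intro hb
        exact hfab (by simp [hf, ha, hb])
      obtain ⟨h1, h2⟩ := key a b hadj ha hb
      exact ⟨a, b, he', hne, h1, h2⟩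
    · have hb : b.1 ≤ n := by
        by_contra hb
        exact hfab (by simp [hf, ha, hb])
      obtain ⟨h1, h2⟩ := key b a hadj.symm hb ha
      refine ⟨b, a, ?_, ?_, h1, h2⟩
      · rwa [Sym2.eq_swap]
      · rwa [Sym2.eq_swap]

end Specific

/-! ### Symmetry transport -/

section Symmetry

open SimpleGraph Walk

/-- The vertical flip `(a, i) ↦ (a, 2 - i)` as a graph automorphism of `ℤ □ P₃`. -/
def flipV : GZP3 ≃g GZP3 := by
  refine ⟨Function.Involutive.toPerm (fun p : ℤ × Fin 3 => (p.1, 2 - p.2)) ?_, ?_⟩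
  · intro p
    obtain ⟨a, i⟩ := p
    show (a, 2 - (2 - i)) = (a, i)
    have h : (2 : Fin 3) - (2 - i) = i := by fin_cases i <;> decide
    rw [h]
  · intro p q
    obtain ⟨a, i⟩ := p
    obtain ⟨b, j⟩ := q
    show GZP3.Adj (a, 2 - i) (b, 2 - j) ↔ GZP3.Adj (a, i) (b, j)
    rw [gzp3_adj, gzp3_adj]
    fin_cases i <;> fin_cases j <;> simp <;> omega

/-- The horizontal flip `(a, i) ↦ (-a, i)` as a graph automorphism of `ℤ □ P₃`. -/
def flipH : GZP3 ≃g GZP3 := by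
  refine ⟨Function.Involutive.toPerm (fun p : ℤ × Fin 3 => (-p.1, p.2)) ?_, ?_⟩
  · intro p
    obtain ⟨a, i⟩ := p
    simp
  · intro p q
    obtain ⟨a, i⟩ := p
    obtain ⟨b, j⟩ := q
    show GZP3.Adj (-a, i) (-b, j) ↔ GZP3.Adj (a, i) (b, j)
    rw [gzp3_adj, gzp3_adj]
    constructor <;> rintro (⟨h1, h2⟩ | ⟨h1, h2⟩)
    · exact Or.inl ⟨by omega, h2⟩
    · exact Or.inr ⟨h1, by omega⟩
    · exact Or.inl ⟨by omega, h2⟩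
    · exact Or.inr ⟨h1, by omega⟩

/-- The composition of both flips. -/
def flipHV : GZP3 ≃g GZP3 := flipH.trans flipV

@[simp] lemma flipV_apply (a : ℤ) (i : Fin 3) : flipV (a, i) = (a, 2 - i) := rfl

@[simp] lemma flipH_apply (a : ℤ) (i : Fin 3) : flipH (a, i) = (-a, i) := rfl

@[simp] lemma flipHV_apply (a : ℤ) (i : Fin 3) : flipHV (a, i) = (-a, 2 - i) := rfl

@[simp] lemma toHom_apply (φ : GZP3 ≃g GZP3) (x : ℤ × Fin 3) : φ.toHom x = φ x := rfl

@[simp] lemma symm_toHom_apply (φ : GZP3 ≃g GZP3) (x : ℤ × Fin 3) :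
    φ.symm.toHom x = φ.symm x := rfl

@[simp] lemma sym2_map_toHom (φ : GZP3 ≃g GZP3) (e : Sym2 (ℤ × Fin 3)) :
    Sym2.map (⇑φ.toHom) e = Sym2.map (⇑φ) e := rfl

@[simp] lemma sym2_map_symm_toHom (φ : GZP3 ≃g GZP3) (e : Sym2 (ℤ × Fin 3)) :
    Sym2.map (⇑φ.symm.toHom) e = Sym2.map (⇑φ.symm) e := rfl

lemma sym2_map_symm (φ : GZP3 ≃g GZP3) (e : Sym2 (ℤ × Fin 3)) :
    Sym2.map φ.symm (Sym2.map φ e) = e := by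
  rw [Sym2.map_map]
  have : ((φ.symm : ℤ × Fin 3 → ℤ × Fin 3) ∘ (φ : ℤ × Fin 3 → ℤ × Fin 3)) = id := by
    funext x
    exact φ.symm_apply_apply x
  rw [this, Sym2.map_id, id_eq]

lemma sym2_map_symm' (φ : GZP3 ≃g GZP3) (e : Sym2 (ℤ × Fin 3)) :
    Sym2.map φ (Sym2.map φ.symm e) = e := by
  rw [Sym2.map_map]
  have : ((φ : ℤ × Fin 3 → ℤ × Fin 3) ∘ (φ.symm : ℤ × Fin 3 → ℤ × Fin 3)) = id := by
    funext x
    exact φ.apply_symm_apply x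
  rw [this, Sym2.map_id, id_eq]

lemma mem_support_map_iff (φ : GZP3 ≃g GZP3) {z : ℤ × Fin 3} (c : GZP3.Walk z z)
    (t : ℤ × Fin 3) : φ t ∈ (c.map φ.toHom).support ↔ t ∈ c.support := by
  rw [Walk.support_map, List.mem_map]
  constructor
  · rintro ⟨a, ha, hat⟩
    have : a = t := φ.injective hat
    exact this ▸ ha
  · exact fun h => ⟨t, h, rfl⟩

lemma mem_edges_map_iff (φ : GZP3 ≃g GZP3) {z : ℤ × Fin 3} (c : GZP3.Walk z z)
    (a b : ℤ × Fin 3) : s(φ a, φ b) ∈ (c.map φ.toHom).edges ↔ s(a, b) ∈ c.edges := by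
  rw [Walk.edges_map, List.mem_map]
  constructor
  · rintro ⟨e, he, hee⟩
    rw [sym2_map_toHom] at hee
    have : e = s(a, b) := by
      apply Sym2.map.injective φ.injective
      rw [hee, Sym2.map_pair_eq]
    exact this ▸ he
  · intro h
    exact ⟨s(a, b), h, by rw [sym2_map_toHom, Sym2.map_pair_eq]⟩

lemma cdist_map (φ : GZP3 ≃g GZP3) {z : ℤ × Fin 3} (c : GZP3.Walk z z)
    (a b : ℤ × Fin 3) :
    cdist (fun _ => (1 : ℝ)) (c.map φ.toHom) (φ a) (φ b) = cdist (fun _ => (1 : ℝ)) c a b := by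
  unfold cdist
  congr 1
  ext r
  simp only [Set.mem_setOf_eq]
  constructor
  · rintro ⟨w', ⟨hwe, hws⟩, rfl⟩
    refine ⟨(w'.map φ.symm.toHom).copy (φ.symm_apply_apply a) (φ.symm_apply_apply b),
      ⟨?_, ?_⟩, ?_⟩
    · intro e he
      rw [Walk.edges_copy, Walk.edges_map, List.mem_map] at he
      obtain ⟨e₀, he₀, rfl⟩ := he
      have h1 := hwe e₀ he₀
      rw [Walk.edges_map, List.mem_map] at h1
      obtain ⟨e₁, he₁, rfl⟩ := h1
      rw [sym2_map_symm_toHom, sym2_map_toHom, sym2_map_symm]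
      exact he₁
    · intro v hv
      rw [Walk.support_copy, Walk.support_map, List.mem_map] at hv
      obtain ⟨v₀, hv₀, rfl⟩ := hv
      have h1 := hws v₀ hv₀
      rw [Walk.support_map, List.mem_map] at h1
      obtain ⟨v₁, hv₁, rfl⟩ := h1
      rw [symm_toHom_apply, toHom_apply, φ.symm_apply_apply]
      exact hv₁
    · rw [wlen_one, wlen_one, Walk.length_copy, Walk.length_map]
  · rintro ⟨w, ⟨hwe, hws⟩, rfl⟩
    refine ⟨w.map φ.toHom, ⟨?_, ?_⟩, ?_⟩
    · intro e he
      rw [Walk.edges_map, List.mem_map] at he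
      obtain ⟨e₀, he₀, rfl⟩ := he
      rw [Walk.edges_map]
      exact List.mem_map.2 ⟨e₀, hwe e₀ he₀, rfl⟩
    · intro v hv
      rw [Walk.support_map, List.mem_map] at hv
      obtain ⟨v₀, hv₀, rfl⟩ := hv
      rw [Walk.support_map]
      exact List.mem_map.2 ⟨v₀, hws v₀ hv₀, rfl⟩
    · rw [wlen_one, wlen_one, Walk.length_map]

lemma svl_back (φ : GZP3 ≃g GZP3) {z : ℤ × Fin 3} {c : GZP3.Walk z z} {v' : ℤ × Fin 3}
    (h : ShortcutVertexLe (fun _ => (1 : ℝ)) (c.map φ.toHom) 2 v') :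
    ShortcutVertexLe (fun _ => (1 : ℝ)) c 2 (φ.symm v') := by
  obtain ⟨p', q', σ', ⟨⟨hpath, hps, hqs, hlt⟩, hstrict⟩, hlen, hv⟩ := h
  refine ⟨φ.symm p', φ.symm q', σ'.map φ.symm.toHom, ⟨⟨?_, ?_, ?_, ?_⟩, ?_⟩, ?_, ?_⟩
  · exact Walk.map_isPath_of_injective φ.symm.injective hpath
  · have := (mem_support_map_iff φ c (φ.symm p')).1 (by rwa [φ.apply_symm_apply])
    exact this
  · have := (mem_support_map_iff φ c (φ.symm q')).1 (by rwa [φ.apply_symm_apply])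
    exact this
  · have hcd : cdist (fun _ => (1 : ℝ)) c (φ.symm p') (φ.symm q') =
        cdist (fun _ => (1 : ℝ)) (c.map φ.toHom) p' q' := by
      rw [← cdist_map φ c (φ.symm p') (φ.symm q'), φ.apply_symm_apply, φ.apply_symm_apply]
    rw [hcd, wlen_one, Walk.length_map, ← wlen_one σ']
    exact hlt
  · intro a ha hac
    rw [Walk.support_map, List.mem_map] at ha
    obtain ⟨a₀, ha₀, rfl⟩ := ha
    have h1 : a₀ ∈ (c.map φ.toHom).support := by
      have h2 : (φ.symm a₀ : ℤ × Fin 3) ∈ c.support := hac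
      have h3 := (mem_support_map_iff φ c (φ.symm a₀)).2 h2
      rwa [φ.apply_symm_apply] at h3
    rcases hstrict a₀ ha₀ h1 with rfl | rfl
    · exact Or.inl rfl
    · exact Or.inr rfl
  · rw [wlen_one, Walk.length_map, ← wlen_one σ']
    exact hlen
  · rcases hv with rfl | rfl
    · exact Or.inl rfl
    · exact Or.inr rfl

lemma goal_back (φ : GZP3 ≃g GZP3) {z x : ℤ × Fin 3} {c : GZP3.Walk z z}
    (h : Goal (c.map φ.toHom) (φ x)) : Goal c x := by
  obtain ⟨v', hsvl, hd⟩ := h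
  refine ⟨φ.symm v', svl_back φ hsvl, ?_⟩
  have heq : cdist (fun _ => (1 : ℝ)) c (φ.symm v') x =
      cdist (fun _ => (1 : ℝ)) (c.map φ.toHom) v' (φ x) := by
    rw [← cdist_map φ c (φ.symm v') x, φ.apply_symm_apply]
  rw [heq]
  exact hd

end Symmetry

/-! ### The core case analysis -/

section Core

open SimpleGraph Walk

lemma fin3_cases (i : Fin 3) : i = 0 ∨ i = 1 ∨ i = 2 := by
  fin_cases i
  · exact Or.inl rfl
  · exact Or.inr (Or.inl rfl)
  · exact Or.inr (Or.inr rfl)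

lemma pair_ne_left {a b : ℤ} {i j : Fin 3} (h : a ≠ b) : ((a, i) : ℤ × Fin 3) ≠ (b, j) := by
  intro he
  rw [Prod.mk.injEq] at he
  exact h he.1

lemma pair_ne_right {a b : ℤ} {i j : Fin 3} (h : i ≠ j) : ((a, i) : ℤ × Fin 3) ≠ (b, j) := by
  intro he
  rw [Prod.mk.injEq] at he
  exact h he.2

lemma adjHs (n : ℤ) (j : Fin 3) : GZP3.Adj (n, j) (n - 1, j) :=
  gzp3_adj.2 (Or.inr ⟨rfl, Or.inr (by omega)⟩)

variable {z : ℤ × Fin 3} {c : GZP3.Walk z z}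

lemma eswap {a b : ℤ × Fin 3} (h : s(a, b) ∈ c.edges) : s(b, a) ∈ c.edges := by
  rwa [Sym2.eq_swap] at h

lemma isCycle_map (φ : GZP3 ≃g GZP3) (hc : c.IsCycle) : (c.map φ.toHom).IsCycle :=
  (Walk.map_isCycle_iff_of_injective φ.injective).2 hc

lemma length_map5 (φ : GZP3 ≃g GZP3) (h5 : 5 ≤ c.length) : 5 ≤ (c.map φ.toHom).length := by
  rwa [Walk.length_map]

lemma mem_edges_flipH {a b : ℤ} {i j : Fin 3}
    (h : s(((a, i) : ℤ × Fin 3), (b, j)) ∈ c.edges) {a' b' : ℤ}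
    (ha : a' = -a) (hb : b' = -b) :
    s(((a', i) : ℤ × Fin 3), (b', j)) ∈ (c.map flipH.toHom).edges := by
  subst ha hb
  exact (mem_edges_map_iff flipH c (a, i) (b, j)).2 h

lemma not_mem_supp_flipH {a : ℤ} {i : Fin 3}
    (h : ((a, i) : ℤ × Fin 3) ∉ c.support) {a' : ℤ} (ha : a' = -a) :
    ((a', i) : ℤ × Fin 3) ∉ (c.map flipH.toHom).support := by
  subst ha
  intro hmem
  exact h ((mem_support_map_iff flipH c (a, i)).1 hmem)

lemma mem_edges_flipV {a b : ℤ} {i j i' j' : Fin 3}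
    (h : s(((a, i) : ℤ × Fin 3), (b, j)) ∈ c.edges)
    (hi : i' = 2 - i) (hj : j' = 2 - j) :
    s(((a, i') : ℤ × Fin 3), (b, j')) ∈ (c.map flipV.toHom).edges := by
  subst hi hj
  exact (mem_edges_map_iff flipV c (a, i) (b, j)).2 h

lemma not_mem_supp_flipV {a : ℤ} {i i' : Fin 3}
    (h : ((a, i) : ℤ × Fin 3) ∉ c.support) (hi : i' = 2 - i) :
    ((a, i') : ℤ × Fin 3) ∉ (c.map flipV.toHom).support := by
  subst hi
  intro hmem
  exact h ((mem_support_map_iff flipV c (a, i)).1 hmem)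

/-- Case: `x = (n,1)` with both cycle edges vertical, bottom continuing to the right. -/
lemma core_VV_right (hc : c.IsCycle) {n : ℤ}
    (hu : s(((n, 1) : ℤ × Fin 3), (n, 2)) ∈ c.edges)
    (hw : s(((n, 1) : ℤ × Fin 3), (n, 0)) ∈ c.edges)
    (hfR : ((n + 1, 1) : ℤ × Fin 3) ∉ c.support)
    (hd : s(((n, 0) : ℤ × Fin 3), (n + 1, 0)) ∈ c.edges) : Goal c (n, 1) := by
  obtain ⟨t, htx, ht, tuniq⟩ := other_nbr hc hu
  rcases adj_enum2 (c.adj_of_mem_edges ht) with rfl | rfl | rfl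
  · exact absurd rfl htx
  · -- both continuations to the right: vertical shortcut in column n+1
    have h0 : ((n + 1, 0) : ℤ × Fin 3) ∈ c.support := c.snd_mem_support_of_mem_edges hd
    have h2 : ((n + 1, 2) : ℤ × Fin 3) ∈ c.support := c.snd_mem_support_of_mem_edges ht
    exact goal_dist2 (eswap hd) (eswap hw) (vshort_shortcut h0 h2 hfR).1
  · -- opposite continuations: impossible by the parity argument
    exfalso
    obtain ⟨p, q, hpq, hne, hp1, hq1⟩ :=
      second_cross hc n hd (by norm_num) (by norm_num)
    obtain ⟨p1, p2⟩ := p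
    have hp1' : p1 = n := hp1
    subst p1
    rcases fin3_cases p2 with rfl | rfl | rfl
    · rcases nbr_unique hc (eswap hw) hd (pair_ne_right (by decide)) q hpq with rfl | rfl
      · have hcol : n = n + 1 := hq1
        omega
      · exact hne rfl
    · rcases nbr_unique hc hu hw (pair_ne_right (by decide)) q hpq with rfl | rfl
      · have hcol : n = n + 1 := hq1
        omega
      · have hcol : n = n + 1 := hq1
        omega
    · rcases nbr_unique hc (eswap hu) ht (pair_ne_right (by decide)) q hpq with rfl | rfl
      · have hcol : n = n + 1 := hq1
        omega
      · have hcol : n - 1 = n + 1 := hq1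
        omega

/-- Case: `x = (n,1)` with both cycle edges vertical. -/
lemma core_row1_VV (hc : c.IsCycle) {n : ℤ}
    (hu : s(((n, 1) : ℤ × Fin 3), (n, 2)) ∈ c.edges)
    (hw : s(((n, 1) : ℤ × Fin 3), (n, 0)) ∈ c.edges)
    (hfL : ((n - 1, 1) : ℤ × Fin 3) ∉ c.support)
    (hfR : ((n + 1, 1) : ℤ × Fin 3) ∉ c.support) : Goal c (n, 1) := by
  obtain ⟨d, hdx, hd, duniq⟩ := other_nbr hc hw
  rcases adj_enum0 (c.adj_of_mem_edges hd) with rfl | rfl | rfl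
  · exact absurd rfl hdx
  · exact core_VV_right hc hu hw hfR hd
  · -- bottom continues to the left: flip horizontally
    apply goal_back flipH
    exact core_VV_right (isCycle_map flipH hc)
      (mem_edges_flipH hu rfl rfl)
      (mem_edges_flipH hw rfl rfl)
      (not_mem_supp_flipH hfL (by ring))
      (mem_edges_flipH hd rfl (by ring))

/-- Case: `x = (n,1)`, one edge up, one edge right. -/
lemma core_row1_VH (hc : c.IsCycle) (h5 : 5 ≤ c.length) {n : ℤ}
    (hu : s(((n, 1) : ℤ × Fin 3), (n, 2)) ∈ c.edges)
    (hw : s(((n, 1) : ℤ × Fin 3), (n + 1, 1)) ∈ c.edges)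
    (hf0 : ((n, 0) : ℤ × Fin 3) ∉ c.support) : Goal c (n, 1) := by
  obtain ⟨p, q, hpq, hne, hp1, hq1⟩ :=
    second_cross hc n hw (by norm_num) (by norm_num)
  obtain ⟨p1, p2⟩ := p
  have hp1' : p1 = n := hp1
  subst p1
  rcases fin3_cases p2 with rfl | rfl | rfl
  · exact absurd (c.fst_mem_support_of_mem_edges hpq) hf0
  · exfalso
    rcases nbr_unique hc hu hw (pair_ne_right (by decide)) q hpq with rfl | rfl
    · have hcol : n = n + 1 := hq1
      omega
    · exact hne rfl
  · have hqe : q = ((n + 1, 2) : ℤ × Fin 3) := by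
      rcases adj_enum2 (c.adj_of_mem_edges hpq) with rfl | rfl | rfl
      · exact absurd hq1 (by omega)
      · rfl
      · exact absurd hq1 (by omega)
    subst hqe
    have hR : ((n + 1, 1) : ℤ × Fin 3) ∈ c.support := c.snd_mem_support_of_mem_edges hw
    have hR2 : ((n + 1, 2) : ℤ × Fin 3) ∈ c.support := c.snd_mem_support_of_mem_edges hpq
    by_cases hE : s(((n + 1, 1) : ℤ × Fin 3), (n + 1, 2)) ∈ c.edges
    · -- a 4-cycle inside the cycle: contradiction with the trap lemma
      exfalso
      set S : Finset (ℤ × Fin 3) := {(n, 1), (n, 2), (n + 1, 1), (n + 1, 2)} with hS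
      have hcl : ∀ v ∈ S, ∀ t, s(v, t) ∈ c.edges → t ∈ S := by
        intro v hv t htv
        simp only [hS, Finset.mem_insert, Finset.mem_singleton] at hv ⊢
        rcases hv with rfl | rfl | rfl | rfl
        · rcases nbr_unique hc hu hw (pair_ne_right (by decide)) t htv with rfl | rfl <;> simp
        · rcases nbr_unique hc (eswap hu) hpq (pair_ne_right (by decide)) t htv with
            rfl | rfl <;> simp
        · rcases nbr_unique hc (eswap hw) hE (pair_ne_right (by decide)) t htv with
            rfl | rfl <;> simp
        · rcases nbr_unique hc (eswap hpq) (eswap hE) (pair_ne_right (by decide)) t htv with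
            rfl | rfl <;> simp
      have hlen := trap hc S hcl (c.fst_mem_support_of_mem_edges hu) (by simp [hS])
      have hcard : S.card ≤ 4 := by
        apply le_trans (Finset.card_insert_le _ _)
        have h3 : (insert ((n, 2) : ℤ × Fin 3)
            ({(n + 1, 1), (n + 1, 2)} : Finset (ℤ × Fin 3))).card ≤ 3 := by
          apply le_trans (Finset.card_insert_le _ _)
          have h2 : (insert ((n + 1, 1) : ℤ × Fin 3)
              ({(n + 1, 2)} : Finset (ℤ × Fin 3))).card ≤ 2 :=
            le_trans (Finset.card_insert_le _ _) (by simp)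
          omega
        omega
      omega
    · -- chord between `(n+1,1)` and `(n+1,2)`
      exact goal_dist1 (eswap hw) (chord_shortcut (adj12 (n + 1)) hR hR2 hE).1

/-- Case: `x = (n,1)` with both cycle edges horizontal: impossible. -/
lemma core_row1_HH (hc : c.IsCycle) {n : ℤ}
    (hu : s(((n, 1) : ℤ × Fin 3), (n + 1, 1)) ∈ c.edges)
    (hw : s(((n, 1) : ℤ × Fin 3), (n - 1, 1)) ∈ c.edges)
    (hf0 : ((n, 0) : ℤ × Fin 3) ∉ c.support)
    (hf2 : ((n, 2) : ℤ × Fin 3) ∉ c.support) : Goal c (n, 1) := by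
  exfalso
  obtain ⟨p, q, hpq, hne, hp1, hq1⟩ :=
    second_cross hc n hu (by norm_num) (by norm_num)
  obtain ⟨p1, p2⟩ := p
  have hp1' : p1 = n := hp1
  subst p1
  rcases fin3_cases p2 with rfl | rfl | rfl
  · exact absurd (c.fst_mem_support_of_mem_edges hpq) hf0
  · rcases nbr_unique hc hu hw (pair_ne_left (by omega)) q hpq with rfl | rfl
    · exact hne rfl
    · have hcol : n - 1 = n + 1 := hq1
      omega
  · exact absurd (c.fst_mem_support_of_mem_edges hpq) hf2

/-- Case: `x = (n,0)` with both cycle edges horizontal. -/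
lemma core_row0_LR (hc : c.IsCycle) {n : ℤ}
    (hu : s(((n, 0) : ℤ × Fin 3), (n + 1, 0)) ∈ c.edges)
    (hw : s(((n, 0) : ℤ × Fin 3), (n - 1, 0)) ∈ c.edges)
    (hf1 : ((n, 1) : ℤ × Fin 3) ∉ c.support) : Goal c (n, 0) := by
  have h0 : ((n, 0) : ℤ × Fin 3) ∈ c.support := c.fst_mem_support_of_mem_edges hu
  by_cases h2s : ((n, 2) : ℤ × Fin 3) ∈ c.support
  · exact goal_self h0 (vshort_shortcut h0 h2s hf1).1
  · exfalso
    obtain ⟨p, q, hpq, hne, hp1, hq1⟩ :=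
      second_cross hc n hu (by norm_num) (by norm_num)
    obtain ⟨p1, p2⟩ := p
    have hp1' : p1 = n := hp1
    subst p1
    rcases fin3_cases p2 with rfl | rfl | rfl
    · rcases nbr_unique hc hu hw (pair_ne_left (by omega)) q hpq with rfl | rfl
      · exact hne rfl
      · have hcol : n - 1 = n + 1 := hq1
        omega
    · exact absurd (c.fst_mem_support_of_mem_edges hpq) hf1
    · exact absurd (c.fst_mem_support_of_mem_edges hpq) h2s

/-- Case: `x = (n,0)`, one edge up, one edge right. -/
lemma core_row0_UR (hc : c.IsCycle) (h5 : 5 ≤ c.length) {n : ℤ}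
    (hu : s(((n, 0) : ℤ × Fin 3), (n, 1)) ∈ c.edges)
    (hw : s(((n, 0) : ℤ × Fin 3), (n + 1, 0)) ∈ c.edges) : Goal c (n, 0) := by
  obtain ⟨t, htx, ht, tuniq⟩ := other_nbr hc hu
  rcases adj_enum1 (c.adj_of_mem_edges ht) with rfl | rfl | rfl | rfl
  · exact absurd rfl htx
  · -- t = (n,2) : the cycle goes straight up
    by_cases hR : ((n + 1, 1) : ℤ × Fin 3) ∈ c.support
    · -- chord between (n,1) and (n+1,1)
      have hnotE : s(((n, 1) : ℤ × Fin 3), (n + 1, 1)) ∉ c.edges := by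
        intro hmem
        rcases tuniq _ hmem with h | h
        · exact absurd h (pair_ne_left (by omega))
        · exact absurd h (pair_ne_right (by decide))
      exact goal_dist1 (eswap hu)
        (chord_shortcut (adjH n 1) (c.snd_mem_support_of_mem_edges hu) hR hnotE).1
    · obtain ⟨p, q, hpq, hne, hp1, hq1⟩ :=
        second_cross hc n hw (by norm_num) (by norm_num)
      obtain ⟨p1, p2⟩ := p
      have hp1' : p1 = n := hp1
      subst p1
      rcases fin3_cases p2 with rfl | rfl | rfl
      · rcases nbr_unique hc hu hw (pair_ne_right (by decide)) q hpq with rfl | rfl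
        · exact absurd hq1 (by omega)
        · exact absurd rfl hne
      · exfalso
        rcases tuniq q hpq with rfl | rfl
        · exact absurd hq1 (by omega)
        · exact absurd hq1 (by omega)
      · have hqe : q = ((n + 1, 2) : ℤ × Fin 3) := by
          rcases adj_enum2 (c.adj_of_mem_edges hpq) with rfl | rfl | rfl
          · exact absurd hq1 (by omega)
          · rfl
          · exact absurd hq1 (by omega)
        subst hqe
        exact goal_dist1 (eswap hw)
          (vshort_shortcut (c.snd_mem_support_of_mem_edges hw)
            (c.snd_mem_support_of_mem_edges hpq) hR).1
  · -- t = (n+1,1) : chord or trap around the unit square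
    by_cases hE : s(((n + 1, 1) : ℤ × Fin 3), (n + 1, 0)) ∈ c.edges
    · exfalso
      set S : Finset (ℤ × Fin 3) := {(n, 0), (n, 1), (n + 1, 1), (n + 1, 0)} with hS
      have hcl : ∀ v ∈ S, ∀ r, s(v, r) ∈ c.edges → r ∈ S := by
        intro v hv r hrv
        simp only [hS, Finset.mem_insert, Finset.mem_singleton] at hv ⊢
        rcases hv with rfl | rfl | rfl | rfl
        · rcases nbr_unique hc hu hw (pair_ne_right (by decide)) r hrv with rfl | rfl <;> simp
        · rcases nbr_unique hc (eswap hu) ht (pair_ne_left (by omega)) r hrv with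
            rfl | rfl <;> simp
        · rcases nbr_unique hc (eswap ht) hE (pair_ne_right (by decide)) r hrv with
            rfl | rfl <;> simp
        · rcases nbr_unique hc (eswap hw) (eswap hE) (pair_ne_right (by decide)) r hrv with
            rfl | rfl <;> simp
      have hlen := trap hc S hcl (c.fst_mem_support_of_mem_edges hu) (by simp [hS])
      have hcard : S.card ≤ 4 := by
        apply le_trans (Finset.card_insert_le _ _)
        have h3 : (insert ((n, 1) : ℤ × Fin 3)
            ({(n + 1, 1), (n + 1, 0)} : Finset (ℤ × Fin 3))).card ≤ 3 := by
          apply le_trans (Finset.card_insert_le _ _)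
          have h2 : (insert ((n + 1, 1) : ℤ × Fin 3)
              ({(n + 1, 0)} : Finset (ℤ × Fin 3))).card ≤ 2 :=
            le_trans (Finset.card_insert_le _ _) (by simp)
          omega
        omega
      omega
    · have hnotE : s(((n + 1, 0) : ℤ × Fin 3), (n + 1, 1)) ∉ c.edges := fun h =>
        hE (eswap h)
      exact goal_dist1 (eswap hw)
        (chord_shortcut (adj01 (n + 1)) (c.snd_mem_support_of_mem_edges hw)
          (c.snd_mem_support_of_mem_edges ht) hnotE).1
  · -- t = (n-1,1)
    obtain ⟨p, q, hpq, hne, hp1, hq1⟩ :=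
      second_cross hc n hw (by norm_num) (by norm_num)
    obtain ⟨p1, p2⟩ := p
    have hp1' : p1 = n := hp1
    subst p1
    rcases fin3_cases p2 with rfl | rfl | rfl
    · rcases nbr_unique hc hu hw (pair_ne_right (by decide)) q hpq with rfl | rfl
      · exact absurd hq1 (by omega)
      · exact absurd rfl hne
    · exfalso
      rcases tuniq q hpq with rfl | rfl
      · exact absurd hq1 (by omega)
      · exact absurd hq1 (by omega)
    · have hnotE : s(((n, 1) : ℤ × Fin 3), (n, 2)) ∉ c.edges := by
        intro hmem
        rcases tuniq _ hmem with h | h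
        · exact absurd h (pair_ne_left (by omega))
        · exact absurd h (pair_ne_right (by decide))
      exact goal_dist1 (eswap hu)
        (chord_shortcut (adj12 n) (c.snd_mem_support_of_mem_edges hu)
          (c.fst_mem_support_of_mem_edges hpq) hnotE).1

/-- Case: `x = (n,0)`, one edge up, one edge left: by horizontal flip. -/
lemma core_row0_UL (hc : c.IsCycle) (h5 : 5 ≤ c.length) {n : ℤ}
    (hu : s(((n, 0) : ℤ × Fin 3), (n, 1)) ∈ c.edges)
    (hw : s(((n, 0) : ℤ × Fin 3), (n - 1, 0)) ∈ c.edges) : Goal c (n, 0) := by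
  apply goal_back flipH
  have h1 := mem_edges_flipH hu rfl rfl
  have h2 := mem_edges_flipH hw rfl (show (-n) + 1 = -(n - 1) by ring)
  exact core_row0_UR (isCycle_map flipH hc) (length_map5 flipH h5) h1 h2

/-- Case: `x = (n,1)`, one edge up, one edge left: by horizontal flip. -/
lemma core_row1_VH_L (hc : c.IsCycle) (h5 : 5 ≤ c.length) {n : ℤ}
    (hu : s(((n, 1) : ℤ × Fin 3), (n, 2)) ∈ c.edges)
    (hw : s(((n, 1) : ℤ × Fin 3), (n - 1, 1)) ∈ c.edges)
    (hf0 : ((n, 0) : ℤ × Fin 3) ∉ c.support) : Goal c (n, 1) := by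
  apply goal_back flipH
  exact core_row1_VH (isCycle_map flipH hc) (length_map5 flipH h5)
    (mem_edges_flipH hu rfl rfl)
    (mem_edges_flipH hw rfl (show (-n) + 1 = -(n - 1) by ring))
    (not_mem_supp_flipH hf0 rfl)

/-- Case: `x = (n,1)`, one edge down, one edge right: by vertical flip. -/
lemma core_row1_VH_D (hc : c.IsCycle) (h5 : 5 ≤ c.length) {n : ℤ}
    (hu : s(((n, 1) : ℤ × Fin 3), (n, 0)) ∈ c.edges)
    (hw : s(((n, 1) : ℤ × Fin 3), (n + 1, 1)) ∈ c.edges)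
    (hf2 : ((n, 2) : ℤ × Fin 3) ∉ c.support) : Goal c (n, 1) := by
  apply goal_back flipV
  exact core_row1_VH (isCycle_map flipV hc) (length_map5 flipV h5)
    (mem_edges_flipV hu (by decide) (by decide))
    (mem_edges_flipV hw (by decide) (by decide))
    (not_mem_supp_flipV hf2 (by decide))

/-- Case: `x = (n,1)`, one edge down, one edge left: by both flips. -/
lemma core_row1_VH_DL (hc : c.IsCycle) (h5 : 5 ≤ c.length) {n : ℤ}
    (hu : s(((n, 1) : ℤ × Fin 3), (n, 0)) ∈ c.edges)
    (hw : s(((n, 1) : ℤ × Fin 3), (n - 1, 1)) ∈ c.edges)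
    (hf2 : ((n, 2) : ℤ × Fin 3) ∉ c.support) : Goal c (n, 1) := by
  apply goal_back flipV
  exact core_row1_VH_L (isCycle_map flipV hc) (length_map5 flipV h5)
    (mem_edges_flipV hu (by decide) (by decide))
    (mem_edges_flipV hw (by decide) (by decide))
    (not_mem_supp_flipV hf2 (by decide))

/-- Case: `x = (n,2)`, one edge down, one edge right: by vertical flip. -/
lemma core_row2_DR (hc : c.IsCycle) (h5 : 5 ≤ c.length) {n : ℤ}
    (hu : s(((n, 2) : ℤ × Fin 3), (n, 1)) ∈ c.edges)
    (hw : s(((n, 2) : ℤ × Fin 3), (n + 1, 2)) ∈ c.edges) : Goal c (n, 2) := by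
  apply goal_back flipV
  exact core_row0_UR (isCycle_map flipV hc) (length_map5 flipV h5)
    (mem_edges_flipV hu (by decide) (by decide))
    (mem_edges_flipV hw (by decide) (by decide))

/-- Case: `x = (n,2)`, one edge down, one edge left: by vertical flip. -/
lemma core_row2_DL (hc : c.IsCycle) (h5 : 5 ≤ c.length) {n : ℤ}
    (hu : s(((n, 2) : ℤ × Fin 3), (n, 1)) ∈ c.edges)
    (hw : s(((n, 2) : ℤ × Fin 3), (n - 1, 2)) ∈ c.edges) : Goal c (n, 2) := by
  apply goal_back flipV
  exact core_row0_UL (isCycle_map flipV hc) (length_map5 flipV h5)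
    (mem_edges_flipV hu (by decide) (by decide))
    (mem_edges_flipV hw (by decide) (by decide))

/-- Case: `x = (n,2)` with both cycle edges horizontal: by vertical flip. -/
lemma core_row2_LR (hc : c.IsCycle) {n : ℤ}
    (hu : s(((n, 2) : ℤ × Fin 3), (n + 1, 2)) ∈ c.edges)
    (hw : s(((n, 2) : ℤ × Fin 3), (n - 1, 2)) ∈ c.edges)
    (hf1 : ((n, 1) : ℤ × Fin 3) ∉ c.support) : Goal c (n, 2) := by
  apply goal_back flipV
  exact core_row0_LR (isCycle_map flipV hc)
    (mem_edges_flipV hu (by decide) (by decide))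
    (mem_edges_flipV hw (by decide) (by decide))
    (not_mem_supp_flipV hf1 (by decide))

/-- The main lemma: every vertex of a cycle of length at least `5` in `ℤ □ P₃` is
within cycle-distance `5/2` of a shortcut vertex of a strict shortcut of length `≤ 2`. -/
lemma main_goal (hc : c.IsCycle) (h5 : 5 ≤ c.length) :
    ∀ x ∈ c.support, Goal c x := by
  intro x hx
  obtain ⟨u, w, huw, hu, hw, huniq⟩ := cycle_two_nbrs hc hx
  by_cases hch : ∃ t, GZP3.Adj x t ∧ s(x, t) ∉ c.edges ∧ t ∈ c.support
  · obtain ⟨t, h1, h2, h3⟩ := hch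
    exact goal_self hx (chord_shortcut h1 hx h3 h2).1
  · push_neg at hch
    obtain ⟨n, j⟩ := x
    rcases fin3_cases j with rfl | rfl | rfl
    · -- row 0
      rcases adj_enum0 (c.adj_of_mem_edges hu) with rfl | rfl | rfl <;>
        rcases adj_enum0 (c.adj_of_mem_edges hw) with rfl | rfl | rfl
      · exact absurd rfl huw
      · exact core_row0_UR hc h5 hu hw
      · exact core_row0_UL hc h5 hu hw
      · exact core_row0_UR hc h5 hw hu
      · exact absurd rfl huw
      · -- u = (n+1,0), w = (n-1,0)
        have hne1 : s(((n, 0) : ℤ × Fin 3), (n, 1)) ∉ c.edges := by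
          intro hmem
          rcases huniq _ hmem with h | h
          · exact absurd h (pair_ne_right (by decide))
          · exact absurd h (pair_ne_right (by decide))
        exact core_row0_LR hc hu hw (hch _ (adj01 n) hne1)
      · exact core_row0_UL hc h5 hw hu
      · -- u = (n-1,0), w = (n+1,0)
        have hne1 : s(((n, 0) : ℤ × Fin 3), (n, 1)) ∉ c.edges := by
          intro hmem
          rcases huniq _ hmem with h | h
          · exact absurd h (pair_ne_right (by decide))
          · exact absurd h (pair_ne_right (by decide))
        exact core_row0_LR hc hw hu (hch _ (adj01 n) hne1)
      · exact absurd rfl huw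
    · -- row 1
      have hfree : ∀ t : ℤ × Fin 3, GZP3.Adj (n, 1) t → t ≠ u → t ≠ w →
          t ∉ c.support := by
        intro t hadj htu htw
        refine hch _ hadj ?_
        intro hmem
        rcases huniq _ hmem with h | h
        · exact htu h
        · exact htw h
      rcases adj_enum1 (c.adj_of_mem_edges hu) with rfl | rfl | rfl | rfl <;>
        rcases adj_enum1 (c.adj_of_mem_edges hw) with rfl | rfl | rfl | rfl
      · exact absurd rfl huw
      · -- u = (n,0), w = (n,2) : VV
        exact core_row1_VV hc hw hu
          (hfree _ (adjHs n 1) (pair_ne_right (by decide)) (pair_ne_right (by decide)))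
          (hfree _ (adjH n 1) (pair_ne_right (by decide)) (pair_ne_right (by decide)))
      · -- u = (n,0), w = (n+1,1) : VH_D
        exact core_row1_VH_D hc h5 hu hw
          (hfree _ (adj12 n) (pair_ne_right (by decide)) (pair_ne_right (by decide)))
      · -- u = (n,0), w = (n-1,1) : VH_DL
        exact core_row1_VH_DL hc h5 hu hw
          (hfree _ (adj12 n) (pair_ne_right (by decide)) (pair_ne_right (by decide)))
      · -- u = (n,2), w = (n,0) : VV
        exact core_row1_VV hc hu hw
          (hfree _ (adjHs n 1) (pair_ne_right (by decide)) (pair_ne_right (by decide)))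
          (hfree _ (adjH n 1) (pair_ne_right (by decide)) (pair_ne_right (by decide)))
      · exact absurd rfl huw
      · -- u = (n,2), w = (n+1,1) : VH
        exact core_row1_VH hc h5 hu hw
          (hfree _ (adj01 n).symm (pair_ne_right (by decide)) (pair_ne_right (by decide)))
      · -- u = (n,2), w = (n-1,1) : VH_L
        exact core_row1_VH_L hc h5 hu hw
          (hfree _ (adj01 n).symm (pair_ne_right (by decide)) (pair_ne_right (by decide)))
      · -- u = (n+1,1), w = (n,0) : VH_D
        exact core_row1_VH_D hc h5 hw hu
          (hfree _ (adj12 n) (pair_ne_right (by decide)) (pair_ne_right (by decide)))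
      · -- u = (n+1,1), w = (n,2) : VH
        exact core_row1_VH hc h5 hw hu
          (hfree _ (adj01 n).symm (pair_ne_right (by decide)) (pair_ne_right (by decide)))
      · exact absurd rfl huw
      · -- u = (n+1,1), w = (n-1,1) : HH
        exact core_row1_HH hc hu hw
          (hfree _ (adj01 n).symm (pair_ne_right (by decide)) (pair_ne_right (by decide)))
          (hfree _ (adj12 n) (pair_ne_right (by decide)) (pair_ne_right (by decide)))
      · -- u = (n-1,1), w = (n,0) : VH_DL
        exact core_row1_VH_DL hc h5 hw hu
          (hfree _ (adj12 n) (pair_ne_right (by decide)) (pair_ne_right (by decide)))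
      · -- u = (n-1,1), w = (n,2) : VH_L
        exact core_row1_VH_L hc h5 hw hu
          (hfree _ (adj01 n).symm (pair_ne_right (by decide)) (pair_ne_right (by decide)))
      · -- u = (n-1,1), w = (n+1,1) : HH
        exact core_row1_HH hc hw hu
          (hfree _ (adj01 n).symm (pair_ne_right (by decide)) (pair_ne_right (by decide)))
          (hfree _ (adj12 n) (pair_ne_right (by decide)) (pair_ne_right (by decide)))
      · exact absurd rfl huw
    · -- row 2
      rcases adj_enum2 (c.adj_of_mem_edges hu) with rfl | rfl | rfl <;>
        rcases adj_enum2 (c.adj_of_mem_edges hw) with rfl | rfl | rfl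
      · exact absurd rfl huw
      · exact core_row2_DR hc h5 hu hw
      · exact core_row2_DL hc h5 hu hw
      · exact core_row2_DR hc h5 hw hu
      · exact absurd rfl huw
      · -- u = (n+1,2), w = (n-1,2)
        have hne1 : s(((n, 2) : ℤ × Fin 3), (n, 1)) ∉ c.edges := by
          intro hmem
          rcases huniq _ hmem with h | h
          · exact absurd h (pair_ne_right (by decide))
          · exact absurd h (pair_ne_right (by decide))
        exact core_row2_LR hc hu hw (hch _ (adj12 n).symm hne1)
      · exact core_row2_DL hc h5 hw hu
      · -- u = (n-1,2), w = (n+1,2)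
        have hne1 : s(((n, 2) : ℤ × Fin 3), (n, 1)) ∉ c.edges := by
          intro hmem
          rcases huniq _ hmem with h | h
          · exact absurd h (pair_ne_right (by decide))
          · exact absurd h (pair_ne_right (by decide))
        exact core_row2_LR hc hw hu (hch _ (adj12 n).symm hne1)
      · exact absurd rfl huw

end Core

/-- The Cartesian product graph `G = ℤ □ P₃` with all edges of length
`1` is `3`-densely `(5,2)`-path-chordal: for every cycle `C` in `G` with `L(C) ≥ 5` and
every vertex `x` of `C`, there is, within distance `5/2` of `x` in the length metric
`d_C`, a shortcut vertex of `C` associated to a strict shortcut of length at most `2`. -/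
theorem zline_boxProd_path3_denselyPathChordal :
    DenselyPathChordal GZP3 (fun _ => (1 : ℝ)) 3 5 2 ∧
    ∀ (z : ℤ × Fin 3) (c : GZP3.Walk z z), c.IsCycle → 5 ≤ wlen (fun _ => (1 : ℝ)) c →
      ∀ x ∈ c.support, ∃ v, ShortcutVertexLe (fun _ => (1 : ℝ)) c 2 v ∧
        cdist (fun _ => (1 : ℝ)) c v x < 5 / 2 := by
  have key : ∀ (z : ℤ × Fin 3) (c : GZP3.Walk z z), c.IsCycle →
      5 ≤ wlen (fun _ => (1 : ℝ)) c → ∀ x ∈ c.support,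
      ∃ v, ShortcutVertexLe (fun _ => (1 : ℝ)) c 2 v ∧
        cdist (fun _ => (1 : ℝ)) c v x < 5 / 2 := by
    intro z c hc hlen x hx
    have h5 : 5 ≤ c.length := by
      rw [wlen_one] at hlen
      exact_mod_cast hlen
    exact main_goal hc h5 x hx
  refine ⟨?_, key⟩
  intro z c hc hlen x hx
  obtain ⟨v, hv, hd⟩ := key z c hc hlen x hx
  exact ⟨v, hv, lt_trans hd (by norm_num)⟩

end Chordality
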